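/- Let ε > 0, α ∈ ℝ, and let y = (1/ε)(cos α, sin α) ∈ ℝ² be a source point. Let x ∈ ℝ² have polar coordinates (r, θ), i.e. x = r(cos θ, sin θ) with r ≥ 0, and assume εr < 1. Then the fundamental solution Φ(x − y) = −(1/(2π))·log‖x − y‖ of the operator −Δ in the plane satisfies the convergent expansion Φ(x − y) = (1/(2π))·( log ε + ∑_{m=1}^∞ (εr)^m · cos(m(θ − α))/m ). -/

import Mathlib

/-- Expansion of the fundamental solution `Φ(x - y) = -(1/(2π))·log‖x - y‖` of `-Δ` in the
plane in terms of the harmonic polynomials: if the source point is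
`y = (1/ε)(cos α, sin α)` with `ε > 0`, and `x = r(cos θ, sin θ)` with `r ≥ 0` and `εr < 1`,
then `Φ(x - y) = (1/(2π))·(log ε + ∑_{m=1}^∞ (εr)^m cos(m(θ - α))/m)`, the series being
convergent. -/
theorem stmt1 (ε α r θ : ℝ) (hε : 0 < ε) (hr : 0 ≤ r) (hεr : ε * r < 1)
    (x y : EuclideanSpace ℝ (Fin 2))
    (hy0 : y 0 = (1 / ε) * Real.cos α) (hy1 : y 1 = (1 / ε) * Real.sin α)
    (hx0 : x 0 = r * Real.cos θ) (hx1 : x 1 = r * Real.sin θ) :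
    ∃ S : ℝ,
      HasSum (fun m : ℕ => (ε * r) ^ (m + 1) * Real.cos ((m + 1 : ℝ) * (θ - α)) / (m + 1 : ℝ))
        S ∧
      -(1 / (2 * Real.pi)) * Real.log ‖x - y‖ = (1 / (2 * Real.pi)) * (Real.log ε + S) := by
  set t : ℝ := ε * r with ht
  have ht0 : 0 ≤ t := mul_nonneg hε.le hr
  set φ : ℝ := θ - α with hφ
  set z : ℂ := (t : ℂ) * Complex.exp (φ * Complex.I) with hzdef
  have hznorm : ‖z‖ < 1 := by
    rw [hzdef, norm_mul, Complex.norm_exp_ofReal_mul_I, mul_one, Complex.norm_real,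
      Real.norm_eq_abs, abs_of_nonneg ht0]
    exact hεr
  have h1 := Complex.hasSum_taylorSeries_neg_log hznorm
  have h2 := Complex.hasSum_re h1
  have hterm : ∀ n : ℕ, ((z ^ n / (n : ℂ))).re = t ^ n * Real.cos ((n : ℝ) * φ) / n := by
    intro n
    have hzn : z ^ n / (n : ℂ) = ((t ^ n / n : ℝ) : ℂ) * Complex.exp (((n : ℝ) * φ : ℝ) * Complex.I) := by
      rw [hzdef, mul_pow, ← Complex.exp_nat_mul]
      push_cast
      ring
    rw [hzn, Complex.re_ofReal_mul, Complex.exp_ofReal_mul_I_re]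
    ring
  rw [funext hterm] at h2
  have h3 := (hasSum_nat_add_iff' (f := fun n : ℕ => t ^ n * Real.cos ((n : ℝ) * φ) / n) 1).mpr h2
  simp only [Finset.range_one, Finset.sum_singleton, Nat.cast_zero, pow_zero, zero_mul,
    Real.cos_zero, mul_one, div_zero, sub_zero] at h3
  have h3' : HasSum (fun m : ℕ => (ε * r) ^ (m + 1) * Real.cos ((m + 1 : ℝ) * (θ - α)) / (m + 1 : ℝ))
      ((-Complex.log (1 - z)).re) := by
    convert h3 using 2 with m
    push_cast
    norm_num
    rfl
    rw [ht, hφ, Nat.cast_add, Nat.cast_one]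
  refine ⟨(-Complex.log (1 - z)).re, h3', ?_⟩
  -- compute the norm
  have hz1 : (1 : ℂ) - z ≠ 0 := by
    intro h
    have : ‖(1 : ℂ)‖ = ‖z‖ := by rw [sub_eq_zero.mp h]
    simp at this; rw [this] at hznorm; exact lt_irrefl _ hznorm
  have habs : ‖1 - z‖ = Real.sqrt (1 - 2 * t * Real.cos φ + t ^ 2) := by
    rw [Complex.norm_def, Complex.normSq_apply]
    congr 1
    have hre : (1 - z).re = 1 - t * Real.cos φ := by
      simp [hzdef, Complex.exp_ofReal_mul_I_re]
    have him : (1 - z).im = -(t * Real.sin φ) := by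
      simp [hzdef, Complex.exp_ofReal_mul_I_im]
    rw [hre, him]
    have := Real.sin_sq_add_cos_sq φ
    nlinarith [this]
  have hN : 0 ≤ 1 - 2 * t * Real.cos φ + t ^ 2 := by
    nlinarith [sq_nonneg (1 - t * Real.cos φ), sq_nonneg (t * Real.sin φ),
      Real.sin_sq_add_cos_sq φ]
  have hnorm : ‖x - y‖ = ‖1 - z‖ / ε := by
    rw [habs, ← Real.sqrt_sq hε.le, ← Real.sqrt_div hN, EuclideanSpace.norm_eq,
      Fin.sum_univ_two]
    have h0 : (x - y) 0 = x 0 - y 0 := rfl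
    have h1' : (x - y) 1 = x 1 - y 1 := rfl
    rw [h0, h1', hx0, hx1, hy0, hy1]
    congr 1
    have hc : Real.cos φ = Real.cos θ * Real.cos α + Real.sin θ * Real.sin α := by
      rw [hφ, Real.cos_sub]
    have hs2c2θ := Real.sin_sq_add_cos_sq θ
    have hs2c2α := Real.sin_sq_add_cos_sq α
    simp only [Real.norm_eq_abs, sq_abs]
    rw [ht, hc]
    field_simp
    linear_combination (ε * r) ^ 2 * hs2c2θ + hs2c2α
  have hCpos : 0 < ‖1 - z‖ := by
    simpa [norm_pos_iff] using hz1
  rw [hnorm, Real.log_div hCpos.ne' hε.ne', Complex.neg_re, Complex.log_re]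
  ring
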